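/- Let r ∈ ℕ₀ and k ∈ {2^r, 2^r+1, …, 2^{r+1}−1}. Then for every x ∈ [0,1) one has ∫₀^x wal_k(t) dt = 2^{−r} · wal_k(x) · η(2^r x), where η : ℝ → ℝ is the 1-periodic function with η(x) = x for 0 ≤ x < 1/2 and η(x) = x − 1 for 1/2 ≤ x < 1. Consequently, sup_{x ∈ [0,1]} |∫₀^x wal_k(t) dt| = 2^{−(r+1)}. -/

import Mathlib

open scoped Classical
open MeasureTheory

noncomputable section

/-- The binary digit `ξ_{i+1}` of `x ∈ [0,1)` (using the expansion with infinitely many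
digits different from 1). -/
def rdigit (x : ℝ) (i : ℕ) : ℕ := (⌊x * 2 ^ (i + 1)⌋).toNat % 2

/-- The `k`-th Walsh function in base `2`. -/
def walsh (k : ℕ) (x : ℝ) : ℝ :=
  (-1 : ℝ) ^ ∑ i ∈ Finset.range (Nat.size k), (Nat.testBit k i).toNat * rdigit x i

/-- The one-periodic function `η`, with `η x = x` for `0 ≤ x < 1/2` and `η x = x - 1` for
`1/2 ≤ x < 1`. -/
def eta (x : ℝ) : ℝ := if Int.fract x < 1 / 2 then Int.fract x else Int.fract x - 1

namespace StmtAux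

/-- Exponent of `(-1)` giving the value of `walsh k` on the dyadic interval
`[n/2^(r+1), (n+1)/2^(r+1))`. -/
def E (r k n : ℕ) : ℕ :=
  ∑ i ∈ Finset.range (r + 1), (Nat.testBit k i).toNat * (n / 2 ^ (r - i) % 2)

/-- The value of `walsh k` on the dyadic interval `[n/2^(r+1), (n+1)/2^(r+1))`. -/
def W (r k n : ℕ) : ℝ := (-1 : ℝ) ^ E r k n

lemma abs_W (r k n : ℕ) : |W r k n| = 1 := by
  rw [W, abs_pow, abs_neg, abs_one, one_pow]

lemma rdigit_eq (x : ℝ) (i : ℕ) : rdigit x i = ⌊x * 2 ^ (i + 1)⌋₊ % 2 := by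
  rw [rdigit, Int.floor_toNat]

lemma testBit_top {r k : ℕ} (hk1 : 2 ^ r ≤ k) (hk2 : k < 2 ^ (r + 1)) :
    Nat.testBit k r = true := by
  have h : k / 2 ^ r = 1 := by
    apply Nat.div_eq_of_lt_le (by omega)
    have : 2 ^ (r + 1) = 2 * 2 ^ r := by ring
    omega
  rw [Nat.testBit_eq_decide_div_mod_eq, h]
  rfl

lemma size_eq {r k : ℕ} (hk1 : 2 ^ r ≤ k) (hk2 : k < 2 ^ (r + 1)) :
    Nat.size k = r + 1 :=
  le_antisymm (Nat.size_le.mpr hk2) (Nat.lt_size.mpr hk1)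

lemma walsh_eq {r k : ℕ} (hk1 : 2 ^ r ≤ k) (hk2 : k < 2 ^ (r + 1)) (t : ℝ) :
    walsh k t = W r k ⌊t * 2 ^ (r + 1)⌋₊ := by
  rw [walsh, size_eq hk1 hk2, W, E]
  congr 1
  refine Finset.sum_congr rfl fun i hi => ?_
  have hir : i ≤ r := by
    have := Finset.mem_range.mp hi; omega
  rw [rdigit_eq]
  congr 1
  have h2 : (t * 2 ^ (r + 1)) / ((2 : ℕ) ^ (r - i) : ℕ) = t * 2 ^ (i + 1) := by
    push_cast
    have hsplit : (2 : ℝ) ^ (r + 1) = 2 ^ (i + 1) * 2 ^ (r - i) := by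
      rw [← pow_add]
      congr 1
      omega
    rw [hsplit]
    have h0 : (2 : ℝ) ^ (r - i) ≠ 0 := by positivity
    field_simp
  rw [← h2, Nat.floor_div_natCast]

lemma E_odd {r k : ℕ} (hk1 : 2 ^ r ≤ k) (hk2 : k < 2 ^ (r + 1)) (j : ℕ) :
    E r k (2 * j + 1) = E r k (2 * j) + 1 := by
  rw [E, E, Finset.sum_range_succ, Finset.sum_range_succ]
  have hlast : ∀ n : ℕ, (Nat.testBit k r).toNat * (n / 2 ^ (r - r) % 2) = n % 2 := by
    intro n
    rw [testBit_top hk1 hk2]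
    simp
  rw [hlast, hlast]
  have hsum : ∀ i ∈ Finset.range r,
      (Nat.testBit k i).toNat * ((2 * j + 1) / 2 ^ (r - i) % 2)
        = (Nat.testBit k i).toNat * ((2 * j) / 2 ^ (r - i) % 2) := by
    intro i hi
    have hir : i < r := Finset.mem_range.mp hi
    have h : r - i = (r - i - 1) + 1 := by omega
    rw [h, pow_succ', ← Nat.div_div_eq_div_mul, ← Nat.div_div_eq_div_mul]
    have h1 : (2 * j + 1) / 2 = j := by omega
    have h2 : (2 * j) / 2 = j := by omega
    rw [h1, h2]
  rw [Finset.sum_congr rfl hsum]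
  omega

lemma W_odd {r k : ℕ} (hk1 : 2 ^ r ≤ k) (hk2 : k < 2 ^ (r + 1)) (j : ℕ) :
    W r k (2 * j + 1) = - W r k (2 * j) := by
  rw [W, W, E_odd hk1 hk2, pow_succ]
  ring

lemma sum_W_even {r k : ℕ} (hk1 : 2 ^ r ≤ k) (hk2 : k < 2 ^ (r + 1)) (j : ℕ) :
    ∑ i ∈ Finset.range (2 * j), W r k i = 0 := by
  induction j with
  | zero => simp
  | succ j ih =>
    have h : 2 * (j + 1) = (2 * j + 1) + 1 := by ring
    rw [h, Finset.sum_range_succ, Finset.sum_range_succ, ih, W_odd hk1 hk2]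
    ring

lemma ae_ne_vol (b : ℝ) : ∀ᵐ t : ℝ, t ≠ b := by
  have h : {t : ℝ | ¬ t ≠ b} = {b} := by ext t; simp
  rw [MeasureTheory.ae_iff, h]
  exact Real.volume_singleton

lemma walsh_eq_on {r k : ℕ} (hk1 : 2 ^ r ≤ k) (hk2 : k < 2 ^ (r + 1)) (n : ℕ) {t : ℝ}
    (h1 : (n : ℝ) / 2 ^ (r + 1) ≤ t) (h2 : t < ((n : ℝ) + 1) / 2 ^ (r + 1)) :
    walsh k t = W r k n := by
  rw [walsh_eq hk1 hk2]
  congr 1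
  have hpow : (0 : ℝ) < 2 ^ (r + 1) := by positivity
  have ht0 : 0 ≤ t * 2 ^ (r + 1) := by
    have : (0 : ℝ) ≤ (n : ℝ) / 2 ^ (r + 1) := by positivity
    nlinarith
  rw [Nat.floor_eq_iff ht0]
  constructor
  · calc (n : ℝ) = ((n : ℝ) / 2 ^ (r + 1)) * 2 ^ (r + 1) := by field_simp
    _ ≤ t * 2 ^ (r + 1) := by nlinarith
  · calc t * 2 ^ (r + 1) < (((n : ℝ) + 1) / 2 ^ (r + 1)) * 2 ^ (r + 1) := by nlinarith
    _ = (n : ℝ) + 1 := by field_simp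

lemma key_integ {r k : ℕ} (hk1 : 2 ^ r ≤ k) (hk2 : k < 2 ^ (r + 1)) (n : ℕ) {a b : ℝ}
    (ha : (n : ℝ) / 2 ^ (r + 1) ≤ a) (hab : a ≤ b) (hb : b ≤ ((n : ℝ) + 1) / 2 ^ (r + 1)) :
    IntervalIntegrable (walsh k) volume a b ∧
      (∫ t in a..b, walsh k t) = W r k n * (b - a) := by
  have hae : ∀ᵐ t : ℝ ∂volume, t ∈ Set.Ioc a b → walsh k t = W r k n := by
    filter_upwards [ae_ne_vol (((n : ℝ) + 1) / 2 ^ (r + 1))] with t ht hmem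
    refine walsh_eq_on hk1 hk2 n (le_trans ha hmem.1.le) ?_
    exact lt_of_le_of_ne (le_trans hmem.2 hb) ht
  have hIoc : Set.uIoc a b = Set.Ioc a b := Set.uIoc_of_le hab
  constructor
  · rw [intervalIntegrable_iff, hIoc]
    refine MeasureTheory.Integrable.congr
      ((integrableOn_const_iff (C := W r k n)).mpr (Or.inr measure_Ioc_lt_top)) ?_
    rw [Filter.EventuallyEq, MeasureTheory.ae_restrict_iff' measurableSet_Ioc]
    filter_upwards [hae] with t ht hmem
    exact (ht hmem).symm
  · rw [intervalIntegral.integral_congr_ae (g := fun _ => W r k n) (by rw [hIoc]; exact hae),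
      intervalIntegral.integral_const, smul_eq_mul]
    ring

/-- The dyadic points. -/
def c (r : ℕ) (n : ℕ) : ℝ := (n : ℝ) / 2 ^ (r + 1)

lemma c_mono (r : ℕ) {m n : ℕ} (h : m ≤ n) : c r m ≤ c r n := by
  unfold c
  have : (m : ℝ) ≤ n := by exact_mod_cast h
  gcongr

lemma integ_piece {r k : ℕ} (hk1 : 2 ^ r ≤ k) (hk2 : k < 2 ^ (r + 1)) (n : ℕ) :
    IntervalIntegrable (walsh k) volume (c r n) (c r (n + 1)) ∧
      (∫ t in c r n..c r (n + 1), walsh k t) = W r k n / 2 ^ (r + 1) := by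
  have hb : c r (n + 1) ≤ ((n : ℝ) + 1) / 2 ^ (r + 1) := by unfold c; push_cast; exact le_rfl
  have h := key_integ hk1 hk2 n (a := c r n) (b := c r (n + 1)) le_rfl
    (c_mono r (Nat.le_succ n)) hb
  refine ⟨h.1, ?_⟩
  rw [h.2]
  unfold c
  push_cast
  have h0 : (2 : ℝ) ^ (r + 1) ≠ 0 := by positivity
  field_simp
  ring

lemma integral_to_c {r k : ℕ} (hk1 : 2 ^ r ≤ k) (hk2 : k < 2 ^ (r + 1)) (n : ℕ) :
    (∫ t in (0 : ℝ)..c r n, walsh k t) = (∑ i ∈ Finset.range n, W r k i) / 2 ^ (r + 1) := by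
  have h0 : c r 0 = 0 := by simp [c]
  rw [← h0, ← intervalIntegral.sum_integral_adjacent_intervals
    (a := c r) (n := n) (fun i _ => (integ_piece hk1 hk2 i).1)]
  rw [Finset.sum_div]
  exact Finset.sum_congr rfl fun i _ => (integ_piece hk1 hk2 i).2

lemma W_zero (r k : ℕ) : W r k 0 = 1 := by
  have h : E r k 0 = 0 := by
    rw [E]
    refine Finset.sum_eq_zero fun i _ => ?_
    simp
  rw [W, h, pow_zero]

lemma eta_abs (y : ℝ) : |eta y| ≤ 1 / 2 := by
  have h0 := Int.fract_nonneg y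
  have h1 := Int.fract_lt_one y
  rw [eta]
  split_ifs with h
  · rw [abs_of_nonneg h0]; linarith
  · rw [abs_of_nonpos (by linarith)]; linarith

end StmtAux

theorem stmt0 (r k : ℕ) (hk1 : 2 ^ r ≤ k) (hk2 : k < 2 ^ (r + 1)) :
    (∀ x ∈ Set.Ico (0 : ℝ) 1,
        (∫ t in (0:ℝ)..x, walsh k t) = 1 / 2 ^ r * walsh k x * eta (2 ^ r * x)) ∧
      sSup ((fun x : ℝ => |∫ t in (0:ℝ)..x, walsh k t|) '' Set.Icc 0 1) = 1 / 2 ^ (r + 1) := by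
  have hpow : (0 : ℝ) < 2 ^ (r + 1) := by positivity
  have hpr : (0 : ℝ) < 2 ^ r := by positivity
  have hc0 : StmtAux.c r 0 = 0 := by simp [StmtAux.c]
  have part1 : ∀ x ∈ Set.Ico (0 : ℝ) 1,
      (∫ t in (0:ℝ)..x, walsh k t) = 1 / 2 ^ r * walsh k x * eta (2 ^ r * x) := by
    rintro x ⟨hx0, hx1⟩
    set n := ⌊x * 2 ^ (r + 1)⌋₊ with hn
    have hxnn : (0 : ℝ) ≤ x * 2 ^ (r + 1) := by positivity
    have hb1 : (n : ℝ) ≤ x * 2 ^ (r + 1) := Nat.floor_le hxnn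
    have hb2 : x * 2 ^ (r + 1) < (n : ℝ) + 1 := Nat.lt_floor_add_one _
    have hxc1 : StmtAux.c r n ≤ x := by
      unfold StmtAux.c
      rw [div_le_iff₀ hpow]
      exact hb1
    have hxb : x ≤ ((n : ℝ) + 1) / 2 ^ (r + 1) := by
      rw [le_div_iff₀ hpow]
      exact hb2.le
    have h2 := StmtAux.key_integ hk1 hk2 n (a := StmtAux.c r n) (b := x) le_rfl hxc1 hxb
    have h1 : IntervalIntegrable (walsh k) volume 0 (StmtAux.c r n) := by
      rw [← hc0]
      exact IntervalIntegrable.trans_iterate fun i _ => (StmtAux.integ_piece hk1 hk2 i).1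
    have hsplit : (∫ t in (0:ℝ)..x, walsh k t)
        = (∑ i ∈ Finset.range n, StmtAux.W r k i) / 2 ^ (r + 1)
          + StmtAux.W r k n * (x - StmtAux.c r n) := by
      rw [← intervalIntegral.integral_add_adjacent_intervals h1 h2.1,
        StmtAux.integral_to_c hk1 hk2 n, h2.2]
    have hwx : walsh k x = StmtAux.W r k n := StmtAux.walsh_eq hk1 hk2 x
    have hxx : x * 2 ^ (r + 1) = (2 ^ r * x) * 2 := by rw [pow_succ]; ring
    rcases Nat.even_or_odd n with he | ho
    · obtain ⟨j, hj⟩ := he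
      have hjn : n = 2 * j := by omega
      have hncast : (n : ℝ) = 2 * j := by rw [hjn]; push_cast; ring
      rw [hxx, hncast] at hb1 hb2
      have hfloor : ⌊(2:ℝ) ^ r * x⌋ = (j : ℤ) := by
        rw [Int.floor_eq_iff]
        constructor
        · push_cast
          linarith
        · push_cast
          linarith
      have hfr : Int.fract ((2:ℝ) ^ r * x) = 2 ^ r * x - j := by
        rw [Int.fract, hfloor]; push_cast; ring
      have hfrlt : Int.fract ((2:ℝ) ^ r * x) < 1 / 2 := by
        rw [hfr]
        linarith
      rw [hsplit, eta, if_pos hfrlt, hfr, hwx, hjn, StmtAux.sum_W_even hk1 hk2 j, zero_div]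
      have hcn : StmtAux.c r (2 * j) = (j : ℝ) / 2 ^ r := by
        unfold StmtAux.c
        push_cast
        rw [pow_succ]
        field_simp
      rw [hcn]
      have hgoal : x - (j : ℝ) / 2 ^ r = 1 / 2 ^ r * (2 ^ r * x - (j : ℝ)) := by
        field_simp
      linear_combination (StmtAux.W r k (2 * j)) * hgoal
    · obtain ⟨j, hj⟩ := ho
      have hjn : n = 2 * j + 1 := hj
      have hncast : (n : ℝ) = 2 * j + 1 := by rw [hjn]; push_cast; ring
      rw [hxx, hncast] at hb1 hb2
      have hfloor : ⌊(2:ℝ) ^ r * x⌋ = (j : ℤ) := by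
        rw [Int.floor_eq_iff]
        constructor
        · push_cast
          linarith
        · push_cast
          linarith
      have hfr : Int.fract ((2:ℝ) ^ r * x) = 2 ^ r * x - j := by
        rw [Int.fract, hfloor]; push_cast; ring
      have hfrge : ¬ Int.fract ((2:ℝ) ^ r * x) < 1 / 2 := by
        rw [hfr]
        push_neg
        linarith
      have hsum : ∑ i ∈ Finset.range n, StmtAux.W r k i = - StmtAux.W r k n := by
        rw [hjn, Finset.sum_range_succ, StmtAux.sum_W_even hk1 hk2 j, zero_add,
          StmtAux.W_odd hk1 hk2 j]
        ring
      rw [hsplit, eta, if_neg hfrge, hfr, hwx, hsum]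
      have hcn : StmtAux.c r n = ((2 * j + 1 : ℝ)) / 2 ^ (r + 1) := by
        unfold StmtAux.c
        rw [hncast]
      rw [hcn]
      have hgoal : -(1 : ℝ) / 2 ^ (r + 1) + (x - (2 * (j : ℝ) + 1) / 2 ^ (r + 1))
          = 1 / 2 ^ r * (2 ^ r * x - (j : ℝ) - 1) := by
        rw [pow_succ]
        field_simp
        ring
      linear_combination (StmtAux.W r k n) * hgoal
  refine ⟨part1, ?_⟩
  have hF1 : (∫ t in (0:ℝ)..1, walsh k t) = 0 := by
    have h1 : (1 : ℝ) = StmtAux.c r (2 ^ (r + 1)) := by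
      unfold StmtAux.c
      rw [Nat.cast_pow]
      push_cast
      field_simp
    rw [h1, StmtAux.integral_to_c hk1 hk2,
      show (2 : ℕ) ^ (r + 1) = 2 * 2 ^ r by ring,
      StmtAux.sum_W_even hk1 hk2, zero_div]
  apply IsGreatest.csSup_eq
  constructor
  · have h12 : (1 : ℝ) ≤ 2 ^ (r + 1) := by
      calc (1 : ℝ) = 1 ^ (r + 1) := (one_pow _).symm
      _ ≤ 2 ^ (r + 1) := by gcongr <;> norm_num
    refine ⟨StmtAux.c r 1, ⟨?_, ?_⟩, ?_⟩
    · unfold StmtAux.c; positivity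
    · unfold StmtAux.c
      push_cast
      rw [div_le_one hpow]
      exact h12
    · show |∫ t in (0:ℝ)..StmtAux.c r 1, walsh k t| = 1 / 2 ^ (r + 1)
      rw [StmtAux.integral_to_c hk1 hk2 1]
      simp only [Finset.sum_range_one, StmtAux.W_zero]
      rw [abs_of_nonneg (by positivity)]
  · rintro y ⟨x, hx, rfl⟩
    show |∫ t in (0:ℝ)..x, walsh k t| ≤ 1 / 2 ^ (r + 1)
    rcases eq_or_lt_of_le hx.2 with h1 | h1
    · rw [h1, hF1, abs_zero]
      positivity
    · rw [part1 x ⟨hx.1, h1⟩, abs_mul, abs_mul,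
        StmtAux.walsh_eq hk1 hk2, StmtAux.abs_W]
      have he := StmtAux.eta_abs ((2:ℝ) ^ r * x)
      have h2 : |1 / (2:ℝ) ^ r| = 1 / 2 ^ r := abs_of_nonneg (by positivity)
      rw [h2, mul_one, pow_succ]
      calc 1 / (2:ℝ) ^ r * |eta (2 ^ r * x)| ≤ 1 / 2 ^ r * (1 / 2) := by
            gcongr
        _ = 1 / (2 ^ r * 2) := by ring

end
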